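/- If f : ℝⁿ → ℝᵐ is additive and for each coordinate function f_k (k = 1,...,m) the map x ↦ exp(i·f_k(x)) is Lebesgue measurable, then there exists an m×n real matrix A with f(x) = A·x for all x ∈ ℝⁿ. -/

import Mathlib

open Real MeasureTheory
open scoped Convolution ContDiff


lemma arc_lemma (t : ℝ) (h : ‖Complex.exp (Complex.I * t) - 1‖ < 1) :
    ∃ k : ℤ, |t - 2 * π * k| < π / 2 := by
  have hc : Real.cos t > 1 / 2 := by
    have h2 : ‖Complex.exp (Complex.I * t) - 1‖ ^ 2 < 1 := by
      nlinarith [norm_nonneg (Complex.exp (Complex.I * t) - 1)]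
    rw [Complex.sq_norm] at h2
    have he : Complex.exp (Complex.I * t) = Complex.mk (Real.cos t) (Real.sin t) := by
      rw [mul_comm, Complex.exp_mul_I]
      apply Complex.ext <;>
        simp [Complex.cos_ofReal_re, Complex.sin_ofReal_re]
    rw [he] at h2
    have : Complex.normSq (Complex.mk (Real.cos t) (Real.sin t) - 1)
        = (Real.cos t - 1) ^ 2 + (Real.sin t) ^ 2 := by
      simp [Complex.normSq_apply, Complex.ext_iff, sub_eq_add_neg]
      ring
    rw [this] at h2
    nlinarith [Real.sin_sq_add_cos_sq t]
  refine ⟨round (t / (2 * π)), ?_⟩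
  set k := round (t / (2 * π)) with hk
  have hπ : (0:ℝ) < π := Real.pi_pos
  have hs : |t - 2 * π * k| ≤ π := by
    have := abs_sub_round (t / (2 * π))
    have h2π : (0:ℝ) < 2 * π := by linarith
    have : |t / (2 * π) - k| ≤ 1 / 2 := this
    have heq : (2 * π) * (t / (2 * π) - k) = t - 2 * π * k := by field_simp
    calc |t - 2 * π * k| = 2 * π * |t / (2 * π) - k| := by
            rw [← heq, abs_mul, abs_of_pos h2π]
      _ ≤ 2 * π * (1 / 2) := by nlinarith
      _ = π := by ring
  have hcos : Real.cos (t - 2 * π * k) = Real.cos t := by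
    have := Real.cos_sub_int_mul_two_pi t k
    rw [← this]
    ring_nf
  by_contra hcon
  push_neg at hcon
  set s := t - 2 * π * k with hsdef
  have hcs : Real.cos s > 1 / 2 := by rw [hcos]; exact hc
  have : Real.cos s ≤ 0 := by
    rcases le_or_gt 0 s with h0 | h0
    · have h1 : π / 2 ≤ s := by rwa [abs_of_nonneg h0] at hcon
      have h2 : s ≤ π + π / 2 := by nlinarith [abs_of_nonneg h0 ▸ hs]
      exact Real.cos_nonpos_of_pi_div_two_le_of_le h1 h2
    · have h1 : π / 2 ≤ -s := by rwa [abs_of_neg h0] at hcon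
      have h2 : -s ≤ π + π / 2 := by
        rw [abs_of_neg h0] at hs; linarith
      have := Real.cos_nonpos_of_pi_div_two_le_of_le h1 h2
      rwa [Real.cos_neg] at this
  linarith

lemma halving_lemma (t : ℝ) (H : ∀ j : ℕ, ∃ k : ℤ, |t / 2 ^ j - 2 * π * k| < π / 2) :
    |t| < π / 2 := by
  have hπ : (0:ℝ) < π := Real.pi_pos
  have step : ∀ j : ℕ, |t / 2 ^ (j + 1)| < π / 2 → |t / 2 ^ j| < π / 2 := by
    intro j hj
    have h2 : t / 2 ^ j = 2 * (t / 2 ^ (j + 1)) := by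
      rw [pow_succ]; ring
    have hlt : |t / 2 ^ j| < π := by
      rw [h2, abs_mul, abs_two]; linarith
    obtain ⟨k, hk⟩ := H j
    have hk0 : k = 0 := by
      by_contra hkne
      have h1k : (1:ℤ) ≤ |k| := Int.one_le_abs hkne
      have : (1:ℝ) ≤ |(k:ℝ)| := by
        rw [← Int.cast_abs]; exact_mod_cast h1k
      have habs : |2 * π * k| = 2 * π * |(k:ℝ)| := by
        rw [abs_mul, abs_of_pos (by linarith : (0:ℝ) < 2 * π)]
      have : 2 * π ≤ |2 * π * k| := by rw [habs]; nlinarith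
      have htr : |2 * π * (k:ℝ)| ≤ |t / 2 ^ j| + |t / 2 ^ j - 2 * π * k| := by
        calc |2 * π * (k:ℝ)| = |t / 2 ^ j - (t / 2 ^ j - 2 * π * k)| := by ring_nf
          _ ≤ |t / 2 ^ j| + |t / 2 ^ j - 2 * π * k| := abs_sub _ _
      nlinarith
    rw [hk0] at hk
    simpa using hk
  obtain ⟨N, hN⟩ : ∃ N : ℕ, |t| / 2 ^ N < π / 2 := by
    obtain ⟨N, hN⟩ := pow_unbounded_of_one_lt (|t| / (π / 2)) (by norm_num : (1:ℝ) < 2)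
    refine ⟨N, ?_⟩
    rw [div_lt_iff₀ (by positivity)] at hN ⊢
    nlinarith [abs_nonneg t]
  have key : ∀ d : ℕ, |t / 2 ^ (N - d)| < π / 2 := by
    intro d
    induction d with
    | zero => simpa [abs_div, abs_of_pos (by positivity : (0:ℝ) < (2:ℝ)^N)] using hN
    | succ d ih =>
      rcases le_or_gt N d with hd | hd
      · have : N - (d + 1) = N - d := by omega
        rw [this]; exact ih
      · have : N - d = (N - (d + 1)) + 1 := by omega
        rw [this] at ih
        exact step _ ih
  have := key N
  simpa using this

lemma char_continuous {n : ℕ} (g : (Fin n → ℝ) → ℝ) (hg : ∀ x y, g (x + y) = g x + g y)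
    (hm : AEMeasurable (fun x => Complex.exp (Complex.I * (g x : ℂ))) volume) :
    Continuous (fun x => Complex.exp (Complex.I * (g x : ℂ))) := by
  set χ : (Fin n → ℝ) → ℂ := fun x => Complex.exp (Complex.I * (g x : ℂ)) with hχdef
  have hχ1 : ∀ x, ‖χ x‖ = 1 := by
    intro x; simp [hχdef, Complex.norm_exp]
  have hχmul : ∀ x y, χ (x + y) = χ x * χ y := by
    intro x y
    simp only [hχdef, hg, ← Complex.exp_add]
    congr 1
    push_cast
    ring
  have hloc : LocallyIntegrable χ volume := by
    intro x
    refine ⟨Metric.closedBall x 1, Metric.closedBall_mem_nhds x one_pos, ?_⟩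
    refine Measure.integrableOn_of_bounded (M := 1) ?_ hm.aestronglyMeasurable ?_
    · exact (isCompact_closedBall x 1).measure_lt_top.ne
    · filter_upwards with y
      rw [hχ1]
  -- find a bump with nonzero pairing
  have hbump : ∃ φ : (Fin n → ℝ) → ℝ, ContDiff ℝ ∞ φ ∧ HasCompactSupport φ ∧
      (∫ x, χ x * (φ x : ℂ)) ≠ 0 := by
    by_contra hcon
    push_neg at hcon
    have hae : ∀ᵐ x, χ x = 0 := by
      refine ae_eq_zero_of_integral_contDiff_smul_eq_zero hloc ?_
      intro φ hφ1 hφ2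
      have := hcon φ hφ1 hφ2
      rw [← this]
      refine integral_congr_ae ?_
      filter_upwards with x
      rw [Complex.real_smul, mul_comm]
    have hne : (volume : Measure (Fin n → ℝ)) ≠ 0 := by
      intro h0
      have := isOpen_univ.measure_pos (volume : Measure (Fin n → ℝ)) Set.univ_nonempty
      rw [h0] at this
      simp at this
    have : (Filter.NeBot (ae (volume : Measure (Fin n → ℝ)))) := ae_neBot.mpr hne
    obtain ⟨x, hx⟩ := hae.exists
    have := hχ1 x
    rw [hx] at this
    simp at this
  obtain ⟨φ, hφ1, hφ2, hc⟩ := hbump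
  set c : ℂ := ∫ x, χ x * (φ x : ℂ) with hcdef
  set ψ : (Fin n → ℝ) → ℂ := fun s => (φ (-s) : ℂ) with hψdef
  have hψcont : Continuous ψ :=
    Complex.continuous_ofReal.comp (hφ1.continuous.comp continuous_neg)
  have hψsupp : HasCompactSupport ψ := by
    have h1 : HasCompactSupport (fun s => φ (-s)) :=
      hφ2.comp_homeomorph (Homeomorph.neg _)
    exact h1.comp_left (g := fun r : ℝ => (r : ℂ)) (by simp)
  have hconv : Continuous (χ ⋆[ContinuousLinearMap.mul ℝ ℂ, volume] ψ) :=
    hψsupp.continuous_convolution_right _ hloc hψcont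
  have hpt : ∀ y, (χ ⋆[ContinuousLinearMap.mul ℝ ℂ, volume] ψ) y = χ y * c := by
    intro y
    rw [convolution_def]
    have h1 : ∀ t, (ContinuousLinearMap.mul ℝ ℂ) (χ t) (ψ (y - t)) = χ t * (φ (t - y) : ℂ) := by
      intro t
      simp [hψdef, neg_sub]
    simp only [h1]
    have h2 := MeasureTheory.integral_add_right_eq_self
      (μ := (volume : Measure (Fin n → ℝ))) (fun t => χ t * (φ (t - y) : ℂ)) y
    rw [← h2]
    have h3 : ∀ s : Fin n → ℝ, χ (s + y) * (φ (s + y - y) : ℂ) = χ y * (χ s * (φ s : ℂ)) := by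
      intro s
      rw [add_sub_cancel_right, hχmul]
      ring
    simp only [h3]
    rw [integral_const_mul]
  have hχeq : χ = fun y => (χ ⋆[ContinuousLinearMap.mul ℝ ℂ, volume] ψ) y / c := by
    funext y
    rw [hpt y, mul_div_assoc, div_self hc, mul_one]
  rw [hχeq]
  exact hconv.div_const c

lemma coord_linear {n : ℕ} (g : (Fin n → ℝ) → ℝ) (hg : ∀ x y, g (x + y) = g x + g y)
    (hm : AEMeasurable (fun x => Complex.exp (Complex.I * (g x : ℂ))) volume) :
    ∀ (c : ℝ) (x : Fin n → ℝ), g (c • x) = c * g x := by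
  have hπ : (0:ℝ) < π := Real.pi_pos
  set gh : (Fin n → ℝ) →+ ℝ := AddMonoidHom.mk' g hg with hghdef
  have hg0 : g 0 = 0 := map_zero gh
  have hscale : ∀ (q : ℕ), 0 < q → ∀ y : Fin n → ℝ, g (((q : ℝ))⁻¹ • y) = g y / q := by
    intro q hq y
    have h1 : (q : ℕ) • (((q : ℝ))⁻¹ • y) = y := by
      rw [← Nat.cast_smul_eq_nsmul ℝ, smul_smul]
      rw [mul_inv_cancel₀ (by positivity : (q:ℝ) ≠ 0), one_smul]
    have h2 := map_nsmul gh q (((q : ℝ))⁻¹ • y)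
    simp only [hghdef, AddMonoidHom.mk'_apply] at h2
    rw [h1] at h2
    have h3 : (q : ℕ) • g (((q : ℝ))⁻¹ • y) = (q : ℝ) * g (((q : ℝ))⁻¹ • y) := by
      rw [nsmul_eq_mul]
    rw [h3] at h2
    field_simp
    rw [h2]
    ring
  have hmul : ∀ (q : ℕ) (y : Fin n → ℝ), g ((q : ℝ) • y) = q * g y := by
    intro q y
    have h2 := map_nsmul gh q y
    simp only [hghdef, AddMonoidHom.mk'_apply] at h2
    rw [← Nat.cast_smul_eq_nsmul ℝ] at h2
    rw [h2, nsmul_eq_mul]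
  have hχcont := char_continuous g hg hm
  have hχ0 : Complex.exp (Complex.I * (g 0 : ℂ)) = 1 := by
    rw [hg0]; simp
  obtain ⟨δ, hδ, hδ1⟩ : ∃ δ > 0, ∀ y : Fin n → ℝ, dist y 0 < δ →
      dist (Complex.exp (Complex.I * (g y : ℂ))) (Complex.exp (Complex.I * (g 0 : ℂ))) < 1 := by
    have := Metric.continuousAt_iff.mp (hχcont.continuousAt (x := 0))
    obtain ⟨δ, hδ, h⟩ := this 1 one_pos
    exact ⟨δ, hδ, fun y hy => h hy⟩
  have claim1 : ∀ y : Fin n → ℝ, dist y 0 < δ → |g y| < π / 2 := by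
    intro y hy
    apply halving_lemma
    intro j
    apply arc_lemma
    set z : Fin n → ℝ := (((2:ℝ) ^ j))⁻¹ • y with hzdef
    have hz : dist z 0 < δ := by
      rw [dist_zero_right] at hy ⊢
      rw [hzdef, norm_smul]
      have h1 : ‖((2:ℝ) ^ j)⁻¹‖ ≤ 1 := by
        rw [Real.norm_eq_abs, abs_of_pos (by positivity)]
        exact inv_le_one_of_one_le₀ (one_le_pow₀ (by norm_num))
      nlinarith [norm_nonneg y, hy]
    have hgz : g z = g y / 2 ^ j := by
      have := hscale (2 ^ j) (by positivity) y
      rw [hzdef]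
      push_cast at this ⊢
      exact this
    have := hδ1 z hz
    rw [hχ0, Complex.dist_eq, hgz] at this
    exact_mod_cast this
  rw [hghdef] at *
  have hcont0 : ContinuousAt g 0 := by
    rw [Metric.continuousAt_iff]
    intro ε hε
    obtain ⟨q, hq⟩ := exists_nat_gt (π / (2 * ε))
    have hqpos : 0 < q := by
      have h0 : (0:ℝ) < (q:ℝ) := lt_trans (by positivity) hq
      exact_mod_cast h0
    refine ⟨δ / q, by positivity, ?_⟩
    intro y hy
    rw [dist_zero_right] at hy
    have h1 : dist ((q : ℝ) • y) 0 < δ := by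
      rw [dist_zero_right, norm_smul, Real.norm_eq_abs, abs_of_pos (by positivity : (0:ℝ) < q)]
      rw [lt_div_iff₀ (by positivity : (0:ℝ) < (q:ℝ))] at hy
      linarith [hy]
    have h2 := claim1 _ h1
    rw [hmul q y, abs_mul, abs_of_pos (by positivity : (0:ℝ) < (q:ℝ))] at h2
    rw [dist_eq_norm, hg0, sub_zero, Real.norm_eq_abs]
    have h3 : π / 2 < q * ε := by
      rw [div_lt_iff₀ (by positivity : (0:ℝ) < 2 * ε)] at hq
      nlinarith
    nlinarith [abs_nonneg (g y)]
  have hcont : Continuous g := by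
    have := continuous_of_continuousAt_zero (AddMonoidHom.mk' g hg) hcont0
    exact this
  intro c x
  exact map_real_smul (AddMonoidHom.mk' g hg) hcont c x

theorem stmt_14 (n m : ℕ) (f : (Fin n → ℝ) → (Fin m → ℝ))
    (hf : ∀ x y, f (x + y) = f x + f y)
    (hmeas : ∀ k : Fin m,
      AEMeasurable (fun x => Complex.exp (Complex.I * (f x k : ℂ))) volume) :
    ∃ A : Matrix (Fin m) (Fin n) ℝ, ∀ x, f x = A.mulVec x := by
  have hadd : ∀ k : Fin m, ∀ x y, f (x + y) k = f x k + f y k := by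
    intro k x y
    rw [hf]
    simp
  have hlin : ∀ k : Fin m, ∀ (c : ℝ) (x : Fin n → ℝ), f (c • x) k = c * f x k :=
    fun k => coord_linear (fun x => f x k) (hadd k) (hmeas k)
  refine ⟨Matrix.of fun k j => f (fun i => if j = i then 1 else 0) k, ?_⟩
  intro x
  funext k
  set L : (Fin n → ℝ) →ₗ[ℝ] ℝ :=
    { toFun := fun y => f y k
      map_add' := fun a b => hadd k a b
      map_smul' := fun c y => hlin k c y } with hL
  have := LinearMap.pi_apply_eq_sum_univ L x
  simp only [hL, LinearMap.coe_mk, AddHom.coe_mk] at this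
  rw [this]
  simp [Matrix.mulVec, dotProduct, Matrix.of_apply, smul_eq_mul, mul_comm]
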